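/- Let f, g be twice differentiable on [a,b] with g > 0 on [a,b] and g' > 0 on [a,b). Define Y_{f,g}(x) = (f'(x)/g'(x))·g(x) − f(x). If f'/g' is increasing on [a,b], Y_{f,g}(a) ≤ 0, and Y_{f,g}(b) ≥ 0, then there exists x₀ ∈ [a,b] such that f/g is decreasing on [a,x₀] and increasing on [x₀,b]. -/

import Mathlib

open Set

theorem second_kind_rule_piecewise (a b : ℝ) (hab : a < b) (f g : ℝ → ℝ)
    (hf : ∀ x ∈ Icc a b, DifferentiableAt ℝ f x)
    (hg : ∀ x ∈ Icc a b, DifferentiableAt ℝ g x)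
    (hf' : ∀ x ∈ Icc a b, DifferentiableAt ℝ (deriv f) x)
    (hg'' : ∀ x ∈ Icc a b, DifferentiableAt ℝ (deriv g) x)
    (hgpos : ∀ x ∈ Icc a b, 0 < g x)
    (hg' : ∀ x ∈ Ico a b, 0 < deriv g x)
    (hmono : MonotoneOn (fun x => deriv f x / deriv g x) (Icc a b))
    (hYa : deriv f a / deriv g a * g a - f a ≤ 0)
    (hYb : 0 ≤ deriv f b / deriv g b * g b - f b) :
    ∃ x₀ ∈ Icc a b,
      AntitoneOn (fun x => f x / g x) (Icc a x₀) ∧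
      MonotoneOn (fun x => f x / g x) (Icc x₀ b) := by
  set h : ℝ → ℝ := fun x => deriv f x / deriv g x with hh
  set Y : ℝ → ℝ := fun x => h x * g x - f x with hYdef
  have hgne : ∀ x ∈ Ico a b, deriv g x ≠ 0 := fun x hx => (hg' x hx).ne'
  have hhd : ∀ x ∈ Ico a b, DifferentiableAt ℝ h x := fun x hx =>
    (hf' x (Ico_subset_Icc_self hx)).div (hg'' x (Ico_subset_Icc_self hx)) (hgne x hx)
  have hYd : ∀ x ∈ Ico a b, DifferentiableAt ℝ Y x := fun x hx =>
    ((hhd x hx).mul (hg x (Ico_subset_Icc_self hx))).sub (hf x (Ico_subset_Icc_self hx))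
  -- deriv h ≥ 0 on Ioo a b
  have hderivh : ∀ x ∈ Ioo a b, 0 ≤ deriv h x := by
    intro x hx
    have hx' : x ∈ Ico a b := Ioo_subset_Ico_self hx
    have hd := (hhd x hx').hasDerivAt
    rw [hasDerivAt_iff_tendsto_slope] at hd
    refine ge_of_tendsto hd ?_
    have hmem : Icc a b ∈ nhds x := Icc_mem_nhds hx.1 hx.2
    filter_upwards [self_mem_nhdsWithin, mem_nhdsWithin_of_mem_nhds hmem] with y hy hy'
    have hyx : y ≠ x := hy
    rw [slope_def_field]
    rcases lt_or_gt_of_ne hyx with hlt | hgt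
    · have h1 : h y ≤ h x := hmono hy' (Ico_subset_Icc_self hx') hlt.le
      have h2 : y - x < 0 := by linarith
      rw [div_nonneg_iff]
      exact Or.inr ⟨by linarith, h2.le⟩
    · have h1 : h x ≤ h y := hmono (Ico_subset_Icc_self hx') hy' hgt.le
      have h2 : 0 < y - x := by linarith
      rw [div_nonneg_iff]
      exact Or.inl ⟨by linarith, h2.le⟩
  -- Y is monotone on Ico a b
  have hYmono : MonotoneOn Y (Ico a b) := by
    apply monotoneOn_of_deriv_nonneg (convex_Ico a b)
    · exact fun x hx => (hYd x hx).continuousAt.continuousWithinAt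
    · rw [interior_Ico]
      exact fun x hx => (hYd x (Ioo_subset_Ico_self hx)).differentiableWithinAt
    · rw [interior_Ico]
      intro x hx
      have hx' : x ∈ Ico a b := Ioo_subset_Ico_self hx
      have hx'' : x ∈ Icc a b := Ico_subset_Icc_self hx'
      have hder : deriv Y x = deriv h x * g x + h x * deriv g x - deriv f x := by
        rw [hYdef]
        rw [deriv_fun_sub (f := fun y => h y * g y) ((hhd x hx').mul (hg x hx'')) (hf x hx''),
          deriv_fun_mul (hhd x hx') (hg x hx'')]
      have hcancel : h x * deriv g x = deriv f x := by
        rw [hh]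
        exact div_mul_cancel₀ _ (hgne x hx')
      rw [hder, hcancel]
      have := mul_nonneg (hderivh x hx) (hgpos x hx'').le
      linarith
  -- the splitting point
  set S : Set ℝ := {x | x ∈ Ico a b ∧ Y x ≤ 0} with hS
  have haS : a ∈ S := ⟨⟨le_refl a, hab⟩, hYa⟩
  have hSne : S.Nonempty := ⟨a, haS⟩
  have hSbdd : BddAbove S := ⟨b, fun x hx => hx.1.2.le⟩
  set x₀ : ℝ := sSup S with hx₀def
  have hax₀ : a ≤ x₀ := le_csSup hSbdd haS
  have hx₀b : x₀ ≤ b := csSup_le hSne fun x hx => hx.1.2.le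
  have key1 : ∀ x ∈ Ico a x₀, Y x ≤ 0 := by
    intro x hx
    obtain ⟨s, hsS, hxs⟩ := exists_lt_of_lt_csSup hSne hx.2
    have hxab : x ∈ Ico a b := ⟨hx.1, lt_of_lt_of_le (lt_of_lt_of_le hxs hsS.1.2.le) le_rfl⟩
    calc Y x ≤ Y s := hYmono hxab hsS.1 hxs.le
      _ ≤ 0 := hsS.2
  have key2 : ∀ x ∈ Ioo x₀ b, 0 ≤ Y x := by
    intro x hx
    by_contra hc
    push_neg at hc
    have : x ∈ S := ⟨⟨hax₀.trans hx.1.le, hx.2⟩, hc.le⟩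
    exact absurd (le_csSup hSbdd this) (not_le.mpr hx.1)
  -- derivative formula for f/g
  have hderiv_div : ∀ x ∈ Ico a b,
      deriv (fun y => f y / g y) x = deriv g x * Y x / g x ^ 2 := by
    intro x hx
    have hx' : x ∈ Icc a b := Ico_subset_Icc_self hx
    rw [deriv_fun_div (hf x hx') (hg x hx') (hgpos x hx').ne']
    rw [hYdef, hh]
    have h0 := hgne x hx
    have h1 := (hgpos x hx').ne'
    field_simp
  have hcont : ∀ x ∈ Icc a b, ContinuousAt (fun y => f y / g y) x := fun x hx =>
    ((hf x hx).continuousAt).div ((hg x hx).continuousAt) (hgpos x hx).ne'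
  have hdiff : ∀ x ∈ Icc a b, DifferentiableAt ℝ (fun y => f y / g y) x := fun x hx =>
    (hf x hx).div (hg x hx) (hgpos x hx).ne'
  refine ⟨x₀, ⟨hax₀, hx₀b⟩, ?_, ?_⟩
  · -- antitone on Icc a x₀
    apply antitoneOn_of_deriv_nonpos (convex_Icc a x₀)
    · intro x hx
      exact (hcont x ⟨hx.1, hx.2.trans hx₀b⟩).continuousWithinAt
    · rw [interior_Icc]
      intro x hx
      exact (hdiff x ⟨hx.1.le, hx.2.le.trans hx₀b⟩).differentiableWithinAt
    · rw [interior_Icc]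
      intro x hx
      have hxab : x ∈ Ico a b := ⟨hx.1.le, lt_of_lt_of_le hx.2 hx₀b⟩
      rw [hderiv_div x hxab]
      rw [div_nonpos_iff]
      refine Or.inr ⟨mul_nonpos_of_nonneg_of_nonpos (hg' x hxab).le
        (key1 x ⟨hx.1.le, hx.2⟩), sq_nonneg _⟩
  · -- monotone on Icc x₀ b
    apply monotoneOn_of_deriv_nonneg (convex_Icc x₀ b)
    · intro x hx
      exact (hcont x ⟨hax₀.trans hx.1, hx.2⟩).continuousWithinAt
    · rw [interior_Icc]
      intro x hx
      exact (hdiff x ⟨hax₀.trans hx.1.le, hx.2.le⟩).differentiableWithinAt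
    · rw [interior_Icc]
      intro x hx
      have hxab : x ∈ Ico a b := ⟨hax₀.trans hx.1.le, hx.2⟩
      rw [hderiv_div x hxab]
      exact div_nonneg (mul_nonneg (hg' x hxab).le (key2 x hx)) (sq_nonneg _)
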